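/- There exists a constant C > 0 such that for every F ∈ ℝ^{2×2} with ‖F‖ ≤ 1 one has |dist(Id + F, SO(2))² − ‖sym F‖²| ≤ C‖F‖³. -/

import Mathlib

open Matrix

/-- The Frobenius norm of a real 2×2 matrix. -/
noncomputable def frobNorm (A : Matrix (Fin 2) (Fin 2) ℝ) : ℝ :=
  Real.sqrt (∑ i : Fin 2, ∑ j : Fin 2, (A i j) ^ 2)

/-- The distance (in Frobenius norm) of a 2×2 matrix from `SO(2)`. -/
noncomputable def distSO2 (G : Matrix (Fin 2) (Fin 2) ℝ) : ℝ :=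
  sInf ((fun R => frobNorm (G - R)) '' {R : Matrix (Fin 2) (Fin 2) ℝ | Rᵀ * R = 1 ∧ R.det = 1})

/-- The symmetric part of a 2×2 matrix. -/
noncomputable def symPart (F : Matrix (Fin 2) (Fin 2) ℝ) : Matrix (Fin 2) (Fin 2) ℝ :=
  (1 / 2 : ℝ) • (F + Fᵀ)

lemma so2_struct (R : Matrix (Fin 2) (Fin 2) ℝ) (h1 : Rᵀ * R = 1) (h2 : R.det = 1) :
    R 1 1 = R 0 0 ∧ R 0 1 = -(R 1 0) ∧ (R 0 0)^2 + (R 1 0)^2 = 1 := by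
  have e00 := congrFun (congrFun h1 0) 0
  have e01 := congrFun (congrFun h1 0) 1
  have e11 := congrFun (congrFun h1 1) 1
  simp [Matrix.mul_apply, Fin.sum_univ_two, Matrix.one_apply] at e00 e01 e11
  rw [Matrix.det_fin_two] at h2
  refine ⟨?_, ?_, ?_⟩
  · nlinarith [sq_nonneg (R 0 1 + R 1 0), sq_nonneg (R 1 1 - R 0 0)]
  · nlinarith [sq_nonneg (R 0 1 + R 1 0), sq_nonneg (R 1 1 - R 0 0)]
  · nlinarith [sq_nonneg (R 0 1 + R 1 0), sq_nonneg (R 1 1 - R 0 0)]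

lemma cauchy2 (p q x z : ℝ) (h : x^2 + z^2 = 1) : (p*x + q*z)^2 ≤ p^2 + q^2 := by
  nlinarith [sq_nonneg (p*z - q*x)]

lemma two_mul_le (M r : ℝ) (hM : 0 ≤ M) (hr : 0 ≤ r) (h : 4*r^2 ≤ M^2) : 2*r ≤ M := by
  nlinarith

lemma distSO2_eq (G : Matrix (Fin 2) (Fin 2) ℝ)
    (hpq : 0 < (G 0 0 + G 1 1)^2 + (G 1 0 - G 0 1)^2) :
    distSO2 G = Real.sqrt ((G 0 0)^2 + (G 0 1)^2 + (G 1 0)^2 + (G 1 1)^2 + 2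
      - 2 * Real.sqrt ((G 0 0 + G 1 1)^2 + (G 1 0 - G 0 1)^2)) := by
  set p : ℝ := G 0 0 + G 1 1 with hp
  set q : ℝ := G 1 0 - G 0 1 with hq
  set r : ℝ := Real.sqrt (p^2 + q^2) with hrdef
  have hr2 : r^2 = p^2 + q^2 := Real.sq_sqrt (by positivity)
  have hr0 : 0 < r := Real.sqrt_pos.mpr hpq
  have hrne : r ≠ 0 := ne_of_gt hr0
  set Rs : Matrix (Fin 2) (Fin 2) ℝ := !![p/r, -(q/r); q/r, p/r] with hRs
  have e1 : (p/r)^2 + (q/r)^2 = 1 := by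
    field_simp
    linarith [hr2]
  have hT : Rsᵀ = !![p/r, q/r; -(q/r), p/r] := by
    rw [hRs]; ext i j; fin_cases i <;> fin_cases j <;> simp
  have hmem : Rsᵀ * Rs = 1 ∧ Rs.det = 1 := by
    constructor
    · rw [hT, hRs, Matrix.mul_fin_two, Matrix.one_fin_two]
      ext i j; fin_cases i <;> fin_cases j <;> simp <;> nlinarith [e1]
    · rw [hRs, Matrix.det_fin_two_of]
      nlinarith [e1]
  set K : ℝ := (G 0 0)^2 + (G 0 1)^2 + (G 1 0)^2 + (G 1 1)^2 + 2 - 2 * r with hK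
  have hval : (∑ i : Fin 2, ∑ j : Fin 2, ((G - Rs) i j)^2) = K := by
    have expand : (∑ i : Fin 2, ∑ j : Fin 2, ((G - Rs) i j)^2)
        = ((G 0 0)^2 + (G 0 1)^2 + (G 1 0)^2 + (G 1 1)^2) + ((p/r)^2+(q/r)^2)*2
          - 2*(p*(p/r) + q*(q/r)) := by
      simp [hRs, Fin.sum_univ_two, hp, hq]
      ring
    have e2 : p*(p/r) + q*(q/r) = r := by
      have h3 : p*(p/r) + q*(q/r) = (p^2+q^2)/r := by ring
      rw [h3, ← hr2, sq, mul_div_assoc, div_self hrne, mul_one]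
    rw [expand, e1, e2, hK]
    ring
  have hK0 : 0 ≤ K := by
    rw [← hval]; positivity
  unfold distSO2
  have hbdd : BddBelow ((fun R => frobNorm (G - R)) '' {R : Matrix (Fin 2) (Fin 2) ℝ | Rᵀ * R = 1 ∧ R.det = 1}) := by
    refine ⟨0, fun y hy => ?_⟩
    obtain ⟨R, _, hy⟩ := hy
    exact hy ▸ Real.sqrt_nonneg _
  have hval' : frobNorm (G - Rs) = Real.sqrt K := by simp only [frobNorm, hval]
  have hmem2 : Real.sqrt K ∈ ((fun R => frobNorm (G - R)) '' {R : Matrix (Fin 2) (Fin 2) ℝ | Rᵀ * R = 1 ∧ R.det = 1}) :=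
    hval' ▸ Set.mem_image_of_mem _ hmem
  clear_value p q r Rs K
  apply le_antisymm
  · exact csInf_le hbdd hmem2
  · refine le_csInf ⟨Real.sqrt K, hmem2⟩ ?_
    rintro y ⟨R, ⟨hR1, hR2⟩, rfl⟩
    clear hT hmem hRs hval hval' hmem2 hbdd Rs hpq hK0
    obtain ⟨h11, h01, hxz⟩ := so2_struct R hR1 hR2
    have expand : (∑ i : Fin 2, ∑ j : Fin 2, ((G - R) i j)^2)
        = ((G 0 0)^2 + (G 0 1)^2 + (G 1 0)^2 + (G 1 1)^2) + ((R 0 0)^2+(R 1 0)^2)*2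
          - 2*(p*(R 0 0) + q*(R 1 0)) := by
      simp [Fin.sum_univ_two, h11, h01, hp, hq]
      ring
    have hcs : p*(R 0 0) + q*(R 1 0) ≤ r := by
      have h1 : (p*(R 0 0) + q*(R 1 0))^2 ≤ p^2 + q^2 := cauchy2 p q _ _ hxz
      calc p*(R 0 0) + q*(R 1 0) ≤ |p*(R 0 0) + q*(R 1 0)| := le_abs_self _
        _ = Real.sqrt ((p*(R 0 0) + q*(R 1 0))^2) := (Real.sqrt_sq_eq_abs _).symm
        _ ≤ Real.sqrt (p^2+q^2) := Real.sqrt_le_sqrt h1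
        _ = r := hrdef.symm
    apply Real.sqrt_le_sqrt
    rw [expand, hxz, hK]
    linarith

set_option maxHeartbeats 1600000 in
/-- There is `C > 0` such that for all `F` with `‖F‖ ≤ 1`,
`|dist(Id + F, SO(2))² − ‖sym F‖²| ≤ C‖F‖³`. -/
theorem dist_sq_sub_symPart_sq_le :
    ∃ C : ℝ, 0 < C ∧ ∀ F : Matrix (Fin 2) (Fin 2) ℝ, frobNorm F ≤ 1 →
      |distSO2 (1 + F) ^ 2 - frobNorm (symPart F) ^ 2| ≤ C * frobNorm F ^ 3 := by
  refine ⟨7, by norm_num, fun F hF => ?_⟩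
  set a : ℝ := F 0 0 with ha
  set b : ℝ := F 0 1 with hb
  set c : ℝ := F 1 0 with hc
  set d : ℝ := F 1 1 with hd
  set n : ℝ := frobNorm F with hn
  have hn0 : 0 ≤ n := Real.sqrt_nonneg _
  have hn1 : n ≤ 1 := hF
  have hn2 : n^2 = a^2 + b^2 + c^2 + d^2 := by
    rw [hn]
    unfold frobNorm
    rw [Real.sq_sqrt (by positivity)]
    simp [Fin.sum_univ_two]
    rw [← ha, ← hb, ← hc, ← hd]; ring
  have hsum1 : a^2 + b^2 + c^2 + d^2 ≤ 1 := by
    rw [← hn2]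
    nlinarith [hF, hn0]
  -- entries of 1 + F
  have hG00 : (1 + F) 0 0 = 1 + a := by simp [Matrix.add_apply, Matrix.one_apply, ha]
  have hG01 : (1 + F) 0 1 = b := by simp [Matrix.add_apply, Matrix.one_apply, hb]
  have hG10 : (1 + F) 1 0 = c := by simp [Matrix.add_apply, Matrix.one_apply, hc]
  have hG11 : (1 + F) 1 1 = 1 + d := by simp [Matrix.add_apply, Matrix.one_apply, hd]
  -- symPart computation
  have hsym : frobNorm (symPart F) ^ 2 = a^2 + d^2 + (b+c)^2/2 := by
    unfold frobNorm
    rw [Real.sq_sqrt (by positivity)]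
    simp [symPart, Fin.sum_univ_two, Matrix.smul_apply, Matrix.add_apply, ha, hb, hc, hd]
    ring
  -- the positivity hypothesis for distSO2_eq
  have hpq : 0 < ((1+F) 0 0 + (1+F) 1 1)^2 + ((1+F) 1 0 - (1+F) 0 1)^2 := by
    rw [hG00, hG01, hG10, hG11]
    have htlb : -(3/2 : ℝ) ≤ a + d := by
      nlinarith [sq_nonneg (a+d+2), sq_nonneg (a-d), hsum1, sq_nonneg b, sq_nonneg c]
    have : (0:ℝ) < 1 + a + (1 + d) := by linarith
    nlinarith [sq_nonneg (c - b), this]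
  -- the distance formula
  set r : ℝ := Real.sqrt (((1+F) 0 0 + (1+F) 1 1)^2 + ((1+F) 1 0 - (1+F) 0 1)^2) with hrdef
  have hr0 : 0 ≤ r := Real.sqrt_nonneg _
  have hr2 : r^2 = (2 + (a+d))^2 + (c-b)^2 := by
    rw [hrdef, Real.sq_sqrt (by positivity), hG00, hG01, hG10, hG11]
    ring
  have hr' : Real.sqrt ((1 + a + (1 + d))^2 + (c - b)^2) = r := by
    rw [hrdef, hG00, hG01, hG10, hG11]
  have hdist : distSO2 (1 + F)
      = Real.sqrt ((1+a)^2 + b^2 + c^2 + (1+d)^2 + 2 - 2*r) := by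
    rw [distSO2_eq (1+F) hpq, hG00, hG01, hG10, hG11, hr']
  clear hr' hrdef hpq hG00 hG01 hG10 hG11 hF hn ha hb hc hd
  clear_value a b c d n r
  have hK0 : 0 ≤ (1+a)^2 + b^2 + c^2 + (1+d)^2 + 2 - 2*r := by
    have hM0 : (0:ℝ) ≤ (1+a)^2 + b^2 + c^2 + (1+d)^2 + 2 := by positivity
    have hM2 : ((1+a)^2 + b^2 + c^2 + (1+d)^2 + 2)^2 ≥ 4*r^2 := by
      rw [hr2]
      nlinarith [sq_nonneg (a-d), sq_nonneg (b+c),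
        sq_nonneg ((1+a)^2 + b^2 + c^2 + (1+d)^2 - 2)]
    have := two_mul_le _ _ hM0 hr0 (by linarith [hM2])
    linarith
  have hdist2 : distSO2 (1 + F)^2 = (1+a)^2 + b^2 + c^2 + (1+d)^2 + 2 - 2*r := by
    rw [hdist, Real.sq_sqrt hK0]
  -- the difference
  set t : ℝ := a + d with ht
  set u : ℝ := c - b with hu
  clear_value t u
  have hdiff : distSO2 (1 + F)^2 - frobNorm (symPart F)^2
      = (4 + 2*t + u^2/2) - 2*r := by
    rw [hdist2, hsym, ht, hu]; ring
  rw [hdiff]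
  clear hdiff hdist2 hdist hsym hK0
  clear F
  -- bounds on t and u
  have ht2 : t^2 ≤ 2*n^2 := by rw [hn2, ht]; nlinarith [sq_nonneg (a-d), sq_nonneg b, sq_nonneg c]
  have hu2 : u^2 ≤ 2*n^2 := by rw [hn2, hu]; nlinarith [sq_nonneg (b+c), sq_nonneg a, sq_nonneg d]
  have hn3 : (0:ℝ) ≤ n^3 := by positivity
  -- A + 2r ≥ 1
  have hA1 : (1:ℝ) ≤ (4 + 2*t + u^2/2) + 2*r := by
    have htlb : -(3/2 : ℝ) ≤ t := by
      rw [ht]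
      nlinarith [sq_nonneg (a+d+2), sq_nonneg (a-d), hsum1, sq_nonneg b, sq_nonneg c]
    nlinarith [sq_nonneg u, hr0]
  -- the key algebraic identity
  have hDN : ((4 + 2*t + u^2/2) - 2*r) * ((4 + 2*t + u^2/2) + 2*r)
      = 2*t*u^2 + u^4/4 := by
    have hr2' : r^2 = (2 + t)^2 + u^2 := by rw [hr2, ht, hu]
    linear_combination (-4 : ℝ) * hr2'
  -- bound on the numerator
  have hu4 : u^4 ≤ 4*n^4 := by nlinarith [hu2, sq_nonneg u, sq_nonneg n]
  have htu2 : t^2 * u^4 ≤ 8*n^6 := by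
    nlinarith [mul_le_mul ht2 hu4 (by positivity) (by positivity : (0:ℝ) ≤ 2*n^2)]
  have hsq : (2*t*u^2)^2 ≤ (6*n^3)^2 := by nlinarith [htu2]
  have htu_ub : 2*t*u^2 ≤ 6*n^3 := by nlinarith [hsq, hn3, sq_nonneg (2*t*u^2 - 6*n^3), sq_nonneg (2*t*u^2 + 6*n^3)]
  have htu_lb : -(6*n^3) ≤ 2*t*u^2 := by nlinarith [hsq, hn3, sq_nonneg (2*t*u^2 - 6*n^3), sq_nonneg (2*t*u^2 + 6*n^3)]
  have hu4n3 : u^4/4 ≤ n^3 := by nlinarith [hu4, pow_le_pow_left₀ hn0 hn1 1, sq_nonneg n, hn3, mul_le_of_le_one_right (by positivity : (0:ℝ) ≤ n^3) hn1]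
  have hNub : 2*t*u^2 + u^4/4 ≤ 7*n^3 := by linarith
  have hNlb : -(7*n^3) ≤ 2*t*u^2 + u^4/4 := by nlinarith [htu_lb, sq_nonneg (u^2), hn3]
  -- conclude
  rw [abs_le]
  constructor
  · rcases le_or_gt 0 ((4 + 2*t + u^2/2) - 2*r) with h | h
    · linarith [hn3]
    · nlinarith [hDN, hA1, hNlb, h]
  · rcases le_or_gt ((4 + 2*t + u^2/2) - 2*r) 0 with h | h
    · linarith [hn3]
    · nlinarith [hDN, hA1, hNub, h]
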